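/- Let Ω ⊂ ℝ² be an open bounded convex set whose boundary contains a side ℓ = [p_l, p_r] (a maximal segment of frontier Ω), and suppose the boundary of Ω forms obtuse angles with ℓ at both endpoints p_l and p_r. Let S(ℓ) = { x ∈ Ω : the orthogonal projection of x onto the line through ℓ lies in ℓ }. Then there exists c₀ > 0 such that for every point q in the relative interior of ℓ with dist(q, {p_l, p_r}) bounded away from 0, dist(q, (frontier Ω ∩ closure S(ℓ)) \ ℓ) ≥ c₀. -/

import Mathlib

open Filter Metric Set
open scoped Topology RealInnerProductSpace

noncomputable section

abbrev E2 : Type := EuclideanSpace ℝ (Fin 2)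

def Jmap (x : E2) : E2 := (WithLp.equiv 2 (Fin 2 → ℝ)).symm ![-(x 1), x 0]

lemma inner_E2 (x y : E2) : ⟪x, y⟫ = x 0 * y 0 + x 1 * y 1 := by
  simp [PiLp.inner_apply, Fin.sum_univ_two]; ring

lemma Jmap0 (x : E2) : Jmap x 0 = -(x 1) := by simp [Jmap]
lemma Jmap1 (x : E2) : Jmap x 1 = x 0 := by simp [Jmap]

lemma inner_Jmap_self (x : E2) : ⟪x, Jmap x⟫ = 0 := by
  rw [inner_E2, Jmap0, Jmap1]; ring

lemma inner_Jmap_self' (x : E2) : ⟪Jmap x, x⟫ = 0 := by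
  rw [real_inner_comm]; exact inner_Jmap_self x

lemma normsq_E2 (x : E2) : ‖x‖ ^ 2 = x 0 ^ 2 + x 1 ^ 2 := by
  rw [← real_inner_self_eq_norm_sq, inner_E2]; ring

lemma norm_Jmap (x : E2) : ‖Jmap x‖ = ‖x‖ := by
  have h : ‖Jmap x‖ ^ 2 = ‖x‖ ^ 2 := by
    rw [normsq_E2, normsq_E2, Jmap0, Jmap1]; ring
  nlinarith [norm_nonneg x, norm_nonneg (Jmap x)]

/-- Lagrange identity in the plane. -/
lemma master_E2 (u v : E2) : ‖v‖ ^ 2 * ‖u‖ ^ 2 = ⟪v, u⟫ ^ 2 + ⟪v, Jmap u⟫ ^ 2 := by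
  rw [normsq_E2, normsq_E2, inner_E2, inner_E2, Jmap0, Jmap1]
  ring

/-- Decomposition of any vector in the orthogonal basis `(u, Jmap u)`. -/
lemma decomp_E2 (u : E2) (hu : u ≠ 0) (v : E2) :
    v = (⟪v, u⟫ / ‖u‖ ^ 2) • u + (⟪v, Jmap u⟫ / ‖u‖ ^ 2) • Jmap u := by
  have hL : ‖u‖ ≠ 0 := norm_ne_zero_iff.mpr hu
  set d := v - ((⟪v, u⟫ / ‖u‖ ^ 2) • u + (⟪v, Jmap u⟫ / ‖u‖ ^ 2) • Jmap u) with hd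
  have h1 : ⟪d, u⟫ = 0 := by
    rw [hd, inner_sub_left, inner_add_left, real_inner_smul_left, real_inner_smul_left,
      real_inner_self_eq_norm_sq, inner_Jmap_self']
    field_simp
    ring
  have h2 : ⟪d, Jmap u⟫ = 0 := by
    rw [hd, inner_sub_left, inner_add_left, real_inner_smul_left, real_inner_smul_left,
      real_inner_self_eq_norm_sq, inner_Jmap_self, norm_Jmap]
    field_simp
    ring
  have h3 := master_E2 u d
  rw [h1, h2] at h3
  have hLpos : (0:ℝ) < ‖u‖ ^ 2 := by positivity
  have h4 : ‖d‖ ^ 2 = 0 := by nlinarith [sq_nonneg ‖d‖]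
  have h5 : d = 0 := by
    rwa [pow_eq_zero_iff (two_ne_zero), norm_eq_zero] at h4
  rw [hd, sub_eq_zero] at h5
  exact h5


/-- From `I² b² = yw²`, `0 ≤ yw ≤ ε L |b| / 2` and `b ≠ 0`: `I² ≤ ε² L² / 4`. -/
lemma aux_Ibound (I b yw ε Lv : ℝ) (hb : b ≠ 0) (h1 : I ^ 2 * b ^ 2 = yw ^ 2)
    (h2 : 0 ≤ yw) (h3 : yw ≤ ε * Lv * |b| / 2) (hε : 0 ≤ ε) (hL : 0 ≤ Lv) :
    I ^ 2 ≤ ε ^ 2 * Lv ^ 2 / 4 := by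
  have hb2 : (0:ℝ) < b ^ 2 := by positivity
  have hM0 : 0 ≤ ε * Lv * |b| / 2 - yw := by linarith
  have hM1 : 0 ≤ ε * Lv * |b| / 2 + yw := by linarith
  have h4 : yw ^ 2 ≤ ε ^ 2 * Lv ^ 2 * b ^ 2 / 4 := by
    nlinarith [mul_nonneg hM0 hM1, sq_abs b]
  nlinarith [hb2]

/-- horizontal coordinate bound from the distance to an endpoint. -/
lemma aux_sbound (ε Lv nw s I : ℝ) (hε : 0 < ε) (hL : 0 < Lv) (hs : 0 ≤ s)
    (hmaster : nw ^ 2 * Lv ^ 2 = s ^ 2 + I ^ 2) (hn : ε ≤ nw)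
    (hI : I ^ 2 ≤ ε ^ 2 * Lv ^ 2 / 4) : ε * Lv / 2 ≤ s := by
  have h1 : ε ^ 2 ≤ nw ^ 2 := pow_le_pow_left₀ hε.le hn 2
  have h2 : ε ^ 2 * Lv ^ 2 ≤ nw ^ 2 * Lv ^ 2 :=
    mul_le_mul_of_nonneg_right h1 (sq_nonneg Lv)
  nlinarith [mul_pos hε hL, hs, hmaster, hI, h2]

/-- the pulled-back point stays in the horizontal range. -/
lemma aux_pullback (ε Lv R yw y₀ t' sw s₀ : ℝ)
    (hε : 0 < ε) (hL : 0 < Lv) (hR : 0 < R) (hyw : 0 < yw) (hy₀ : 0 < y₀)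
    (ht' : t' * y₀ = y₀ - yw) (hhalf : 1 / 2 ≤ t') (hlt : t' < 1)
    (hb3 : yw * (8 * R) ≤ ε * y₀)
    (hsl : ε * Lv / 2 ≤ sw) (hsr : sw ≤ Lv ^ 2 - ε * Lv / 2)
    (hX1 : -(2 * R * Lv) ≤ sw - s₀) (hX2 : sw - s₀ ≤ 2 * R * Lv) :
    0 ≤ s₀ + t'⁻¹ * (sw - s₀) ∧ s₀ + t'⁻¹ * (sw - s₀) ≤ Lv ^ 2 := by
  have ht'pos : 0 < t' := by linarith
  have hτ1 : t' * t'⁻¹ = 1 := mul_inv_cancel₀ ht'pos.ne'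
  have hτpos : 0 < t'⁻¹ := inv_pos.mpr ht'pos
  have hτle : t'⁻¹ ≤ 2 := by nlinarith
  have hτge : 1 ≤ t'⁻¹ := by nlinarith
  have hτm1 : (t'⁻¹ - 1) * y₀ ≤ 2 * yw := by nlinarith
  have hprod : (t'⁻¹ - 1) * (2 * R * Lv) ≤ ε * Lv / 2 := by
    nlinarith [mul_nonneg hR.le hL.le,
      mul_nonneg (mul_nonneg hR.le hL.le) hyw.le]
  constructor
  · nlinarith [hτge, hX1, hX2, hprod, hsl]
  · nlinarith [hτge, hX1, hX2, hprod, hsr]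

/-- cancel one factor of `Lv`. -/
lemma aux_cancel (a b Lv : ℝ) (hL : 0 < Lv) (h : a * Lv ^ 2 ≤ b * Lv) : a * Lv ≤ b := by
  nlinarith

set_option maxHeartbeats 1000000 in
/-- for an open bounded convex `Ω ⊆ ℝ²` having a side `ℓ = [pl, pr]` in its
boundary that forms obtuse (≥ π/2) angles with the rest of the boundary at both endpoints,
points of `ℓ` at distance ≥ δ from both endpoints are at distance ≥ c₀ > 0 from
`(frontier Ω ∩ closure S(ℓ)) \ ℓ`, where `S(ℓ)` is the perpendicular strip over `ℓ`. -/
theorem stmt_8 (Ω : Set E2) (hO : IsOpen Ω) (hb : Bornology.IsBounded Ω)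
    (hc : Convex ℝ Ω) (hne : Ω.Nonempty)
    (pl pr : E2) (hlr : pl ≠ pr) (hside : segment ℝ pl pr ⊆ frontier Ω)
    (hobl : ∃ ε > 0, ∀ w ∈ frontier Ω, w ∉ segment ℝ pl pr → dist w pl < ε →
      ⟪w - pl, pr - pl⟫ ≤ 0)
    (hobr : ∃ ε > 0, ∀ w ∈ frontier Ω, w ∉ segment ℝ pl pr → dist w pr < ε →
      ⟪w - pr, pl - pr⟫ ≤ 0) :
    ∀ δ > 0, ∃ c₀ > 0, ∀ q ∈ segment ℝ pl pr, δ ≤ dist q pl → δ ≤ dist q pr →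
      ∀ w ∈ (frontier Ω ∩
          closure {x ∈ Ω | 0 ≤ ⟪x - pl, pr - pl⟫ ∧ ⟪x - pr, pr - pl⟫ ≤ 0}) \
          segment ℝ pl pr,
        c₀ ≤ dist q w := by
  intro δ hδ
  obtain ⟨εl, hεl, hobl⟩ := hobl
  obtain ⟨εr, hεr, hobr⟩ := hobr
  obtain ⟨x₀, hx₀⟩ := hne
  set u : E2 := pr - pl with hu_def
  have hu : u ≠ 0 := sub_ne_zero.mpr (Ne.symm hlr)
  set L : ℝ := ‖u‖ with hL_def
  have hL : 0 < L := norm_pos_iff.mpr hu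
  have hε : 0 < min εl εr := lt_min hεl hεr
  set ε := min εl εr with hε_def
  -- the separating functional
  set m : E2 := pl + (2⁻¹ : ℝ) • u with hm_def
  have hm_seg : m ∈ segment ℝ pl pr := by
    rw [segment_eq_image']
    exact ⟨2⁻¹, by norm_num, rfl⟩
  have hm_not : m ∉ Ω := by
    have := hside hm_seg
    rw [hO.frontier_eq] at this
    exact this.2
  obtain ⟨f, hf⟩ := geometric_hahn_banach_open_point hc hO hm_not
  have hplcl : pl ∈ closure Ω := frontier_subset_closure (hside (left_mem_segment ℝ pl pr))
  have hprcl : pr ∈ closure Ω := frontier_subset_closure (hside (right_mem_segment ℝ pl pr))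
  have hfle : ∀ x ∈ closure Ω, f x ≤ f m := fun x hx =>
    closure_minimal (fun a ha => (hf a ha).le)
      (isClosed_le f.continuous continuous_const) hx
  have hfm : f m = f pl + 2⁻¹ * f u := by
    rw [hm_def, map_add, map_smul, smul_eq_mul]
  have hfpr : f pr = f pl + f u := by
    have h : pr = pl + u := by rw [hu_def]; abel
    rw [h, map_add]
  have hfu : f u = 0 := by
    have h1 := hfle pl hplcl
    have h2 := hfle pr hprcl
    rw [hfm] at h1 h2
    rw [hfpr] at h2
    linarith
  have hfml : f m = f pl := by rw [hfm, hfu]; ring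
  set β : ℝ := f (Jmap u) with hβ_def
  -- the functional in coordinates
  have hfd : ∀ v : E2, f v = ⟪v, Jmap u⟫ / L ^ 2 * β := by
    intro v
    conv_lhs => rw [decomp_E2 u hu v]
    rw [map_add, map_smul, map_smul, smul_eq_mul, smul_eq_mul, hfu, ← hβ_def, ← hL_def]
    ring
  have hβ : β ≠ 0 := by
    intro h0
    have h1 : f x₀ = 0 := by rw [hfd x₀, h0]; ring
    have h2 : f m = 0 := by rw [hfd m, h0]; ring
    have h3 := hf x₀ hx₀
    rw [h1, h2] at h3
    exact lt_irrefl 0 h3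
  have hβpos : 0 < |β| := abs_pos.mpr hβ
  have hL2 : (L:ℝ) ^ 2 ≠ 0 := by positivity
  -- the height functional
  set n : E2 := (-β) • Jmap u with hn_def
  have hinner_n : ∀ v : E2, ⟪v, n⟫ = -β * ⟪v, Jmap u⟫ := by
    intro v; rw [hn_def, real_inner_smul_right]
  have hyn : ∀ x : E2, ⟪x - pl, n⟫ = L ^ 2 * (f pl - f x) := by
    intro x
    have h1 : f (x - pl) = ⟪x - pl, Jmap u⟫ / L ^ 2 * β := hfd _
    rw [map_sub, div_mul_eq_mul_div, eq_div_iff hL2] at h1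
    rw [hinner_n]
    linear_combination h1
  have hypos : ∀ x ∈ Ω, 0 < ⟪x - pl, n⟫ := by
    intro x hx
    rw [hyn]
    have h1 := hf x hx
    rw [hfml] at h1
    exact mul_pos (by positivity) (sub_pos.mpr h1)
  have hynonneg : ∀ x ∈ closure Ω, 0 ≤ ⟪x - pl, n⟫ := by
    intro x hx
    refine closure_minimal (t := {x : E2 | 0 ≤ ⟪x - pl, n⟫}) (fun a ha => (hypos a ha).le) ?_ hx
    exact isClosed_le continuous_const
      ((continuous_id.sub continuous_const).inner continuous_const)
  have hun : ⟪u, n⟫ = 0 := by rw [hinner_n, inner_Jmap_self]; ring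
  set N : ℝ := ‖n‖ with hN_def
  have hN : N = |β| * L := by
    rw [hN_def, hn_def, norm_smul, norm_Jmap, Real.norm_eq_abs, abs_neg, hL_def]
  have hNpos : 0 < N := by rw [hN]; positivity
  set y₀ : ℝ := ⟪x₀ - pl, n⟫ with hy₀_def
  have hy₀ : 0 < y₀ := hypos x₀ hx₀
  -- boundedness
  obtain ⟨R, hR0, hRsub⟩ := hb.closure.subset_closedBall_lt 0 pl
  -- the height threshold
  set h₀ : ℝ := min (y₀ / 2) (min (ε * L * |β| / 2) (ε * y₀ / (8 * R))) with hh₀_def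
  have hh₀ : 0 < h₀ := lt_min (by positivity) (lt_min (by positivity) (by positivity))
  refine ⟨min δ (h₀ / N), lt_min hδ (by positivity), ?_⟩
  intro q hq hqpl hqpr w hw
  -- membership in segment: helper
  have hseg_of : ∀ v : E2, ⟪v - pl, n⟫ = 0 → 0 ≤ ⟪v - pl, u⟫ → ⟪v - pl, u⟫ ≤ L ^ 2 →
      v ∈ segment ℝ pl pr := by
    intro v h0 h1 h2
    have hJ : ⟪v - pl, Jmap u⟫ = 0 := by
      rw [hinner_n] at h0
      rcases mul_eq_zero.mp h0 with h | h
      · exact absurd (neg_eq_zero.mp h) hβ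
      · exact h
    have hdec := decomp_E2 u hu (v - pl)
    rw [hJ, ← hL_def] at hdec
    simp only [zero_div, zero_smul, add_zero] at hdec
    rw [segment_eq_image']
    refine ⟨⟪v - pl, u⟫ / L ^ 2, ⟨div_nonneg h1 (by positivity), ?_⟩, ?_⟩
    · rw [div_le_one (by positivity)]; exact h2
    · show pl + (⟪v - pl, u⟫ / L ^ 2) • u = v
      rw [← hdec]; abel
  -- strip facts for w
  have hwf : w ∈ frontier Ω := hw.1.1
  have hwS := hw.1.2
  have hwseg : w ∉ segment ℝ pl pr := hw.2
  have hwcl : w ∈ closure Ω :=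
    closure_mono (fun x (hx : x ∈ Ω ∧ _) => hx.1) hwS
  have hws1 : 0 ≤ ⟪w - pl, u⟫ := by
    have hsub : closure {x ∈ Ω | 0 ≤ ⟪x - pl, u⟫ ∧ ⟪x - pr, u⟫ ≤ 0} ⊆
        {x : E2 | 0 ≤ ⟪x - pl, u⟫} :=
      closure_minimal (fun x hx => hx.2.1)
        (isClosed_le continuous_const
          ((continuous_id.sub continuous_const).inner continuous_const))
    exact hsub hwS
  have hws2 : ⟪w - pr, u⟫ ≤ 0 := by
    have hsub : closure {x ∈ Ω | 0 ≤ ⟪x - pl, u⟫ ∧ ⟪x - pr, u⟫ ≤ 0} ⊆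
        {x : E2 | ⟪x - pr, u⟫ ≤ 0} :=
      closure_minimal (fun x hx => hx.2.2)
        (isClosed_le ((continuous_id.sub continuous_const).inner continuous_const)
          continuous_const)
    exact hsub hwS
  have hrel : ∀ x : E2, ⟪x - pr, u⟫ = ⟪x - pl, u⟫ - L ^ 2 := by
    intro x
    have hx : x - pr = (x - pl) - u := by rw [hu_def]; abel
    rw [hx, inner_sub_left, real_inner_self_eq_norm_sq, hL_def]
  -- the point q
  rw [segment_eq_image'] at hq
  obtain ⟨t, ht01, hqeq0⟩ := hq
  have hqeq : pl + t • u = q := hqeq0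
  have hqpl' : q - pl = t • u := by rw [← hqeq]; abel
  have hqpr' : q - pr = (t - 1) • u := by
    rw [← hqeq, hu_def]
    module
  have hsq : ⟪q - pl, u⟫ = t * L ^ 2 := by
    rw [hqpl', real_inner_smul_left, real_inner_self_eq_norm_sq, hL_def]
  have hyq : ⟪q - pl, n⟫ = 0 := by
    rw [hqpl', real_inner_smul_left, hun]; ring
  have hdpl : dist q pl = t * L := by
    rw [dist_eq_norm, hqpl', norm_smul, Real.norm_eq_abs, abs_of_nonneg ht01.1, hL_def]
  have hdpr : dist q pr = (1 - t) * L := by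
    rw [dist_eq_norm, hqpr', norm_smul, Real.norm_eq_abs, abs_of_nonpos (by linarith [ht01.2]),
      hL_def]
    ring
  by_cases hA : dist w pl < εl
  · -- near pl : strip + obtuseness force w onto the perpendicular line at pl
    have h0 : ⟪w - pl, u⟫ ≤ 0 := hobl w hwf hwseg hA
    have hsw : ⟪w - pl, u⟫ = 0 := le_antisymm h0 hws1
    have hqw : ⟪q - w, u⟫ = t * L ^ 2 := by
      have hqw' : q - w = (q - pl) - (w - pl) := by abel
      rw [hqw', inner_sub_left, hsq, hsw]; ring
    have hCS := real_inner_le_norm (q - w) u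
    rw [hqw, ← hL_def] at hCS
    have hdist : t * L ≤ dist q w := by
      rw [dist_eq_norm]
      exact aux_cancel t ‖q - w‖ L hL hCS
    calc min δ (h₀ / N) ≤ δ := min_le_left _ _
      _ ≤ dist q pl := hqpl
      _ = t * L := hdpl
      _ ≤ dist q w := hdist
  by_cases hB : dist w pr < εr
  · -- near pr
    have h0 : ⟪w - pr, pl - pr⟫ ≤ 0 := hobr w hwf hwseg hB
    have hpl_pr : pl - pr = -u := by rw [hu_def]; abel
    rw [hpl_pr, inner_neg_right] at h0
    have hsw : ⟪w - pr, u⟫ = 0 := le_antisymm hws2 (by linarith)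
    have hqw : ⟪w - q, u⟫ = (1 - t) * L ^ 2 := by
      have hqw' : w - q = (w - pr) - (q - pr) := by abel
      rw [hqw', inner_sub_left, hsw, hrel q, hsq]; ring
    have hCS := real_inner_le_norm (w - q) u
    rw [hqw, ← hL_def] at hCS
    have hdist : (1 - t) * L ≤ dist q w := by
      rw [dist_eq_norm, norm_sub_rev]
      exact aux_cancel (1 - t) ‖w - q‖ L hL hCS
    calc min δ (h₀ / N) ≤ δ := min_le_left _ _
      _ ≤ dist q pr := hqpr
      _ = (1 - t) * L := hdpr
      _ ≤ dist q w := hdist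
  · -- far from both endpoints: the height of w is at least h₀
    push_neg at hA hB
    have hεwl : ε ≤ dist w pl := le_trans (min_le_left _ _) hA
    have hεwr : ε ≤ dist w pr := le_trans (min_le_right _ _) hB
    set yw : ℝ := ⟪w - pl, n⟫ with hyw_def
    have hkey : h₀ ≤ yw := by
      by_contra hcon
      push_neg at hcon
      have hyw0 : 0 ≤ yw := hynonneg w hwcl
      rcases eq_or_lt_of_le hyw0 with heq | hpos
      · -- yw = 0 : w would be on the segment
        apply hwseg
        refine hseg_of w heq.symm hws1 ?_
        have h := hrel w
        linarith [hws2]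
      · -- 0 < yw < h₀ : contradiction with convexity
        have hb1 : yw < y₀ / 2 := lt_of_lt_of_le hcon (min_le_left _ _)
        have hb2 : yw ≤ ε * L * |β| / 2 :=
          le_trans hcon.le (le_trans (min_le_right _ _) (min_le_left _ _))
        have hb3 : yw ≤ ε * y₀ / (8 * R) :=
          le_trans hcon.le (le_trans (min_le_right _ _) (min_le_right _ _))
        have hb3' : yw * (8 * R) ≤ ε * y₀ := by
          have h := (le_div_iff₀ (by positivity : (0:ℝ) < 8 * R)).mp hb3
          linarith
        have hwpl : ε ≤ ‖w - pl‖ := by rw [← dist_eq_norm]; exact hεwl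
        have hwpr : ε ≤ ‖w - pr‖ := by rw [← dist_eq_norm]; exact hεwr
        have hJw : ⟪w - pl, Jmap u⟫ * β = -yw := by
          have h := hinner_n (w - pl)
          rw [← hyw_def] at h
          linear_combination h
        have hI2 : ⟪w - pl, Jmap u⟫ ^ 2 * β ^ 2 = yw ^ 2 := by
          linear_combination (⟪w - pl, Jmap u⟫ * β - yw) * hJw
        have hI2' : ⟪w - pl, Jmap u⟫ ^ 2 ≤ ε ^ 2 * L ^ 2 / 4 :=
          aux_Ibound _ β yw ε L hβ hI2 hpos.le hb2 hε.le hL.le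
        have hmaster1 := master_E2 u (w - pl)
        rw [← hL_def] at hmaster1
        have hswl : ε * L / 2 ≤ ⟪w - pl, u⟫ :=
          aux_sbound ε L ‖w - pl‖ _ _ hε hL hws1 hmaster1 hwpl hI2'
        have hJpr : ⟪w - pr, Jmap u⟫ = ⟪w - pl, Jmap u⟫ := by
          have h : w - pr = (w - pl) - u := by rw [hu_def]; abel
          rw [h, inner_sub_left, inner_Jmap_self]; ring
        have hmaster2 := master_E2 u (w - pr)
        rw [← hL_def, hJpr, hrel w] at hmaster2
        have hs2 : 0 ≤ L ^ 2 - ⟪w - pl, u⟫ := by linarith [hws2, hrel w]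
        have hswr' : ε * L / 2 ≤ L ^ 2 - ⟪w - pl, u⟫ :=
          aux_sbound ε L ‖w - pr‖ _ _ hε hL hs2 (by linear_combination hmaster2) hwpr hI2'
        have hswr : ⟪w - pl, u⟫ ≤ L ^ 2 - ε * L / 2 := by linarith
        -- the pulled-back point on the base line
        have hywy₀ : yw < y₀ := by linarith
        set t' : ℝ := 1 - yw / y₀ with ht'_def
        have hdy : 0 < yw / y₀ := div_pos hpos hy₀
        have ht'pos : 0 < t' := by
          rw [ht'_def]
          have h : yw / y₀ < 1 := (div_lt_one hy₀).mpr hywy₀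
          linarith
        have ht'lt1 : t' < 1 := by rw [ht'_def]; linarith
        have ht'half : 1 / 2 ≤ t' := by
          rw [ht'_def]
          have h : yw / y₀ ≤ 1 / 2 := by rw [div_le_iff₀ hy₀]; linarith
          linarith
        have hτ1 : t' * t'⁻¹ = 1 := mul_inv_cancel₀ ht'pos.ne'
        have hty : t' * y₀ = y₀ - yw := by
          rw [ht'_def]; field_simp
        set z : E2 := x₀ + t'⁻¹ • (w - x₀) with hz_def
        have hw_eq : w = x₀ + t' • (z - x₀) := by
          rw [hz_def]
          have h : x₀ + t'⁻¹ • (w - x₀) - x₀ = t'⁻¹ • (w - x₀) := by abel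
          rw [h, smul_smul, hτ1, one_smul]
          abel
        have hzinn : ∀ v : E2, ⟪z - pl, v⟫ =
            ⟪x₀ - pl, v⟫ + t'⁻¹ * (⟪w - pl, v⟫ - ⟪x₀ - pl, v⟫) := by
          intro v
          have h1 : z - pl = (x₀ - pl) + t'⁻¹ • ((w - pl) - (x₀ - pl)) := by
            rw [hz_def]; module
          rw [h1]
          simp only [inner_add_left, inner_sub_left, real_inner_smul_left]
        have hyz : ⟪z - pl, n⟫ = 0 := by
          rw [hzinn n, ← hy₀_def, ← hyw_def]
          linear_combination t'⁻¹ * hty - y₀ * hτ1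
        -- distance bound for the horizontal coordinate
        have hwx₀d : dist w x₀ ≤ 2 * R := by
          have h1 : dist w pl ≤ R := hRsub hwcl
          have h2 : dist x₀ pl ≤ R := hRsub (subset_closure hx₀)
          calc dist w x₀ ≤ dist w pl + dist pl x₀ := dist_triangle _ _ _
            _ = dist w pl + dist x₀ pl := by rw [dist_comm pl x₀]
            _ ≤ 2 * R := by linarith
        have hsdiff : |⟪w - pl, u⟫ - ⟪x₀ - pl, u⟫| ≤ 2 * R * L := by
          have h1 : ⟪w - pl, u⟫ - ⟪x₀ - pl, u⟫ = ⟪w - x₀, u⟫ := by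
            rw [← inner_sub_left]
            congr 1
            abel
          rw [h1]
          calc |⟪w - x₀, u⟫| ≤ ‖w - x₀‖ * ‖u‖ := abs_real_inner_le_norm _ _
            _ = dist w x₀ * L := by rw [dist_eq_norm, hL_def]
            _ ≤ 2 * R * L := mul_le_mul_of_nonneg_right hwx₀d hL.le
        have habs := abs_le.mp hsdiff
        have hpb := aux_pullback ε L R yw y₀ t' ⟪w - pl, u⟫ ⟪x₀ - pl, u⟫
          hε hL hR0 hpos hy₀ hty ht'half ht'lt1 hb3' hswl hswr habs.1 habs.2
        have hsz0 : 0 ≤ ⟪z - pl, u⟫ := by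
          rw [hzinn u]; exact hpb.1
        have hszL : ⟪z - pl, u⟫ ≤ L ^ 2 := by
          rw [hzinn u]; exact hpb.2
        have hzseg := hseg_of z hyz hsz0 hszL
        have hzcl : z ∈ closure Ω := frontier_subset_closure (hside hzseg)
        have hwint : w ∈ Ω := by
          have hint := hc.openSegment_interior_closure_subset_interior
            (x := x₀) (y := z) (by rw [hO.interior_eq]; exact hx₀) hzcl
          have hmem : w ∈ openSegment ℝ x₀ z := by
            rw [openSegment_eq_image']
            exact ⟨t', ⟨ht'pos, ht'lt1⟩, hw_eq.symm⟩
          have h := hint hmem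
          rwa [hO.interior_eq] at h
        have hwnot : w ∉ Ω := by rw [hO.frontier_eq] at hwf; exact hwf.2
        exact hwnot hwint
    -- conclude
    have hfin : ⟪w - q, n⟫ = yw := by
      have hwq : w - q = (w - pl) - (q - pl) := by abel
      rw [hwq, inner_sub_left, hyq, ← hyw_def]; ring
    have hCS := real_inner_le_norm (w - q) n
    rw [hfin, ← hN_def] at hCS
    have hdist : h₀ / N ≤ dist q w := by
      rw [dist_eq_norm, ← norm_sub_rev, div_le_iff₀ hNpos]
      calc h₀ ≤ yw := hkey
        _ ≤ ‖w - q‖ * N := hCS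
    calc min δ (h₀ / N) ≤ h₀ / N := min_le_right _ _
      _ ≤ dist q w := hdist

end
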